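/- arXiv:1708.03264 — 6 statements merged into one kernel-verified Lean document; each statement's English description precedes it below -/
import Mathlib

section
/- There is no function T : Fin 8 → Bool × Bool × Bool × Bool (an 8-row table with columns A, B, A', B' and no missing data) whose marginal counts equal the Bell family: the (A,B)-marginal has counts m_AB(0,0)=4, m_AB(1,1)=4, m_AB(0,1)=m_AB(1,0)=0; the (A',B)-marginal has m_{A'B}(0,0)=3, m_{A'B}(0,1)=1, m_{A'B}(1,0)=1, m_{A'B}(1,1)=3; the (A,B')-marginal has m_{AB'}(0,0)=3, m_{AB'}(0,1)=1, m_{AB'}(1,0)=1, m_{AB'}(1,1)=3; and the (A',B')-marginal has m_{A'B'}(0,0)=1, m_{A'B'}(0,1)=3, m_{A'B'}(1,0)=3, m_{A'B'}(1,1)=1. -/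
/-- Marginal count of a pair of Bool-valued columns of an 8-row table. -/
def marg (T : Fin 8 → Bool × Bool × Bool × Bool)
    (f g : Bool × Bool × Bool × Bool → Bool) (x y : Bool) : ℕ :=
  (Finset.univ.filter (fun i => f (T i) = x ∧ g (T i) = y)).card

/-- CHSH row weight: number of the events A=B, A'=B, A=B', A'≠B' that hold. -/
def wgt (r : Bool × Bool × Bool × Bool) : ℕ :=
  (if r.1 = r.2.1 then 1 else 0) + (if r.2.2.1 = r.2.1 then 1 else 0) +
  (if r.1 = r.2.2.2 then 1 else 0) + (if r.2.2.1 ≠ r.2.2.2 then 1 else 0)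

lemma wgt_le (r : Bool × Bool × Bool × Bool) : wgt r ≤ 3 := by
  obtain ⟨a, b, a', b'⟩ := r
  cases a <;> cases b <;> cases a' <;> cases b' <;> decide

lemma marg_eq (T : Fin 8 → Bool × Bool × Bool × Bool)
    (f g : Bool × Bool × Bool × Bool → Bool) (x y : Bool) :
    marg T f g x y = ∑ i : Fin 8, (if f (T i) = x ∧ g (T i) = y then 1 else 0) :=
  Finset.card_filter _ _

lemma eq_split (a b : Bool) :
    (if a = b then (1:ℕ) else 0) =
      (if a = false ∧ b = false then 1 else 0) + (if a = true ∧ b = true then 1 else 0) := by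
  cases a <;> cases b <;> decide

lemma ne_split (a b : Bool) :
    (if a ≠ b then (1:ℕ) else 0) =
      (if a = false ∧ b = true then 1 else 0) + (if a = true ∧ b = false then 1 else 0) := by
  cases a <;> cases b <;> decide

theorem no_complete_table_with_bell_marginals :
    ¬ ∃ T : Fin 8 → Bool × Bool × Bool × Bool,
      -- (A,B) marginal
      (marg T (fun r => r.1) (fun r => r.2.1) false false = 4 ∧
       marg T (fun r => r.1) (fun r => r.2.1) false true = 0 ∧
       marg T (fun r => r.1) (fun r => r.2.1) true false = 0 ∧
       marg T (fun r => r.1) (fun r => r.2.1) true true = 4) ∧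
      -- (A',B) marginal
      (marg T (fun r => r.2.2.1) (fun r => r.2.1) false false = 3 ∧
       marg T (fun r => r.2.2.1) (fun r => r.2.1) false true = 1 ∧
       marg T (fun r => r.2.2.1) (fun r => r.2.1) true false = 1 ∧
       marg T (fun r => r.2.2.1) (fun r => r.2.1) true true = 3) ∧
      -- (A,B') marginal
      (marg T (fun r => r.1) (fun r => r.2.2.2) false false = 3 ∧
       marg T (fun r => r.1) (fun r => r.2.2.2) false true = 1 ∧
       marg T (fun r => r.1) (fun r => r.2.2.2) true false = 1 ∧
       marg T (fun r => r.1) (fun r => r.2.2.2) true true = 3) ∧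
      -- (A',B') marginal
      (marg T (fun r => r.2.2.1) (fun r => r.2.2.2) false false = 1 ∧
       marg T (fun r => r.2.2.1) (fun r => r.2.2.2) false true = 3 ∧
       marg T (fun r => r.2.2.1) (fun r => r.2.2.2) true false = 3 ∧
       marg T (fun r => r.2.2.1) (fun r => r.2.2.2) true true = 1) := by
  rintro ⟨T, ⟨h1, _, _, h4⟩, ⟨h5, _, _, h8⟩, ⟨h9, _, _, h12⟩, ⟨_, h14, h15, _⟩⟩
  have hle : ∑ i : Fin 8, wgt (T i) ≤ 24 := by
    calc ∑ i : Fin 8, wgt (T i) ≤ ∑ _i : Fin 8, 3 :=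
          Finset.sum_le_sum (fun i _ => wgt_le (T i))
      _ = 24 := by simp
  have heq : ∑ i : Fin 8, wgt (T i) = 26 := by
    have : ∑ i : Fin 8, wgt (T i) =
        (marg T (fun r => r.1) (fun r => r.2.1) false false +
         marg T (fun r => r.1) (fun r => r.2.1) true true) +
        (marg T (fun r => r.2.2.1) (fun r => r.2.1) false false +
         marg T (fun r => r.2.2.1) (fun r => r.2.1) true true) +
        (marg T (fun r => r.1) (fun r => r.2.2.2) false false +
         marg T (fun r => r.1) (fun r => r.2.2.2) true true) +
        (marg T (fun r => r.2.2.1) (fun r => r.2.2.2) false true +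
         marg T (fun r => r.2.2.1) (fun r => r.2.2.2) true false) := by
      simp only [marg_eq, wgt, ← Finset.sum_add_distrib]
      refine Finset.sum_congr rfl (fun i _ => ?_)
      rw [eq_split (T i).1 (T i).2.1, eq_split (T i).2.2.1 (T i).2.1,
        eq_split (T i).1 (T i).2.2.2, ne_split (T i).2.2.1 (T i).2.2.2]
    rw [this, h1, h4, h5, h8, h9, h12, h14, h15]
  omega
end

section
/- For any probability distribution p on Bool^4 (a joint distribution of four ±1-valued or Boolean random variables A, B, A', B'), the CHSH quantity E(A,B) + E(A,B') + E(A',B) − E(A',B') lies in the interval [−2, 2], where E(X,Y) denotes the expectation of the product of the ±1-valued versions of X and Y. -/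
/-- The ±1 value of a Boolean. -/
def sgn (b : Bool) : ℝ := if b then 1 else -1

/-- Correlation of two Bool-valued coordinates under a pmf on `Bool^4`. -/
def corr (p : Bool × Bool × Bool × Bool → ℝ)
    (f g : Bool × Bool × Bool × Bool → Bool) : ℝ :=
  ∑ σ : Bool × Bool × Bool × Bool, p σ * sgn (f σ) * sgn (g σ)

theorem chsh_inequality (p : Bool × Bool × Bool × Bool → ℝ)
    (hnn : ∀ σ, 0 ≤ p σ) (hsum : ∑ σ : Bool × Bool × Bool × Bool, p σ = 1) :
    -2 ≤ corr p (fun r => r.1) (fun r => r.2.1)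
        + corr p (fun r => r.1) (fun r => r.2.2.2)
        + corr p (fun r => r.2.2.1) (fun r => r.2.1)
        - corr p (fun r => r.2.2.1) (fun r => r.2.2.2) ∧
      corr p (fun r => r.1) (fun r => r.2.1)
        + corr p (fun r => r.1) (fun r => r.2.2.2)
        + corr p (fun r => r.2.2.1) (fun r => r.2.1)
        - corr p (fun r => r.2.2.1) (fun r => r.2.2.2) ≤ 2 := by
  have key : corr p (fun r => r.1) (fun r => r.2.1)
        + corr p (fun r => r.1) (fun r => r.2.2.2)
        + corr p (fun r => r.2.2.1) (fun r => r.2.1)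
        - corr p (fun r => r.2.2.1) (fun r => r.2.2.2)
      = ∑ σ : Bool × Bool × Bool × Bool,
          p σ * (sgn σ.1 * sgn σ.2.1 + sgn σ.1 * sgn σ.2.2.2
            + sgn σ.2.2.1 * sgn σ.2.1 - sgn σ.2.2.1 * sgn σ.2.2.2) := by
    unfold corr
    rw [← Finset.sum_add_distrib, ← Finset.sum_add_distrib, ← Finset.sum_sub_distrib]
    exact Finset.sum_congr rfl fun σ _ => by ring
  have hw : ∀ σ : Bool × Bool × Bool × Bool,
      -2 ≤ sgn σ.1 * sgn σ.2.1 + sgn σ.1 * sgn σ.2.2.2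
        + sgn σ.2.2.1 * sgn σ.2.1 - sgn σ.2.2.1 * sgn σ.2.2.2 ∧
      sgn σ.1 * sgn σ.2.1 + sgn σ.1 * sgn σ.2.2.2
        + sgn σ.2.2.1 * sgn σ.2.1 - sgn σ.2.2.1 * sgn σ.2.2.2 ≤ 2 := by
    rintro ⟨a, b, c, d⟩
    cases a <;> cases b <;> cases c <;> cases d <;> simp [sgn] <;> norm_num
  rw [key]
  constructor
  · calc (-2 : ℝ) = ∑ σ : Bool × Bool × Bool × Bool, p σ * (-2) := by
          rw [← Finset.sum_mul, hsum]; ring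
      _ ≤ _ := Finset.sum_le_sum fun σ _ =>
          mul_le_mul_of_nonneg_left (hw σ).1 (hnn σ)
  · calc _ ≤ ∑ σ : Bool × Bool × Bool × Bool, p σ * 2 :=
          Finset.sum_le_sum fun σ _ =>
            mul_le_mul_of_nonneg_left (hw σ).2 (hnn σ)
      _ = 2 := by rw [← Finset.sum_mul, hsum]; ring
end

section
/- There exists a 16-row table with missing data, T : Fin 16 → (Option Bool)^4 with columns A, B, A', B', such that available-case analysis (counting only rows where both relevant columns are non-missing) yields exactly the Bell marginal tables: the (A,B)-counts are [[4,0],[0,4]], the (A',B)-counts are [[3,1],[1,3]], the (A,B')-counts are [[3,1],[1,3]], and the (A',B')-counts are [[1,3],[3,1]]. -/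
/-- Available-case marginal count of two `Option Bool` columns of a 16-row table. -/
def acount (T : Fin 16 → Option Bool × Option Bool × Option Bool × Option Bool)
    (f g : Option Bool × Option Bool × Option Bool × Option Bool → Option Bool)
    (x y : Bool) : ℕ :=
  (Finset.univ.filter (fun i => f (T i) = some x ∧ g (T i) = some y)).card

theorem missing_data_table_with_bell_marginals :
    ∃ T : Fin 16 → Option Bool × Option Bool × Option Bool × Option Bool,
      -- (A,B) available-case counts
      (acount T (fun r => r.1) (fun r => r.2.1) false false = 4 ∧
       acount T (fun r => r.1) (fun r => r.2.1) false true = 0 ∧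
       acount T (fun r => r.1) (fun r => r.2.1) true false = 0 ∧
       acount T (fun r => r.1) (fun r => r.2.1) true true = 4) ∧
      -- (A',B) available-case counts
      (acount T (fun r => r.2.2.1) (fun r => r.2.1) false false = 3 ∧
       acount T (fun r => r.2.2.1) (fun r => r.2.1) false true = 1 ∧
       acount T (fun r => r.2.2.1) (fun r => r.2.1) true false = 1 ∧
       acount T (fun r => r.2.2.1) (fun r => r.2.1) true true = 3) ∧
      -- (A,B') available-case counts
      (acount T (fun r => r.1) (fun r => r.2.2.2) false false = 3 ∧
       acount T (fun r => r.1) (fun r => r.2.2.2) false true = 1 ∧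
       acount T (fun r => r.1) (fun r => r.2.2.2) true false = 1 ∧
       acount T (fun r => r.1) (fun r => r.2.2.2) true true = 3) ∧
      -- (A',B') available-case counts
      (acount T (fun r => r.2.2.1) (fun r => r.2.2.2) false false = 1 ∧
       acount T (fun r => r.2.2.1) (fun r => r.2.2.2) false true = 3 ∧
       acount T (fun r => r.2.2.1) (fun r => r.2.2.2) true false = 3 ∧
       acount T (fun r => r.2.2.1) (fun r => r.2.2.2) true true = 1) := by
  refine ⟨![
    -- (A, B, A', B')
    (some false, some false, some false, none),
    (some false, some false, some false, none),
    (some true,  some true,  some true,  none),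
    (some true,  some true,  some true,  none),
    (some false, some false, none, some false),
    (some false, some false, none, some false),
    (some true,  some true,  none, some true),
    (some true,  some true,  none, some true),
    (none, some false, some false, some true),
    (none, some true,  some false, some true),
    (none, some false, some true,  some false),
    (none, some true,  some true,  some false),
    (some false, none, some false, some false),
    (some false, none, some false, some true),
    (some true,  none, some true,  some false),
    (some true,  none, some true,  some true)], ?_⟩
  decide
end

section
/- The Bell family of count relations has no nonnegative-integer global section: there is no function N : Bool^4 → ℕ whose four pairwise marginals over the contexts (A,B), (A',B), (A,B'), (A',B') equal respectively [[4,0],[0,4]], [[3,1],[1,3]], [[3,1],[1,3]], [[1,3],[3,1]]. -/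
/-- The (X,Y)-marginal of a count relation `N : Bool^4 → ℕ`. -/
def nmarg (N : Bool × Bool × Bool × Bool → ℕ)
    (f g : Bool × Bool × Bool × Bool → Bool) (x y : Bool) : ℕ :=
  ∑ σ ∈ Finset.univ.filter
      (fun σ : Bool × Bool × Bool × Bool => f σ = x ∧ g σ = y), N σ

theorem bell_family_no_global_section :
    ¬ ∃ N : Bool × Bool × Bool × Bool → ℕ,
      (nmarg N (fun σ => σ.1) (fun σ => σ.2.1) false false = 4 ∧
       nmarg N (fun σ => σ.1) (fun σ => σ.2.1) false true = 0 ∧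
       nmarg N (fun σ => σ.1) (fun σ => σ.2.1) true false = 0 ∧
       nmarg N (fun σ => σ.1) (fun σ => σ.2.1) true true = 4) ∧
      (nmarg N (fun σ => σ.2.2.1) (fun σ => σ.2.1) false false = 3 ∧
       nmarg N (fun σ => σ.2.2.1) (fun σ => σ.2.1) false true = 1 ∧
       nmarg N (fun σ => σ.2.2.1) (fun σ => σ.2.1) true false = 1 ∧
       nmarg N (fun σ => σ.2.2.1) (fun σ => σ.2.1) true true = 3) ∧
      (nmarg N (fun σ => σ.1) (fun σ => σ.2.2.2) false false = 3 ∧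
       nmarg N (fun σ => σ.1) (fun σ => σ.2.2.2) false true = 1 ∧
       nmarg N (fun σ => σ.1) (fun σ => σ.2.2.2) true false = 1 ∧
       nmarg N (fun σ => σ.1) (fun σ => σ.2.2.2) true true = 3) ∧
      (nmarg N (fun σ => σ.2.2.1) (fun σ => σ.2.2.2) false false = 1 ∧
       nmarg N (fun σ => σ.2.2.1) (fun σ => σ.2.2.2) false true = 3 ∧
       nmarg N (fun σ => σ.2.2.1) (fun σ => σ.2.2.2) true false = 3 ∧
       nmarg N (fun σ => σ.2.2.1) (fun σ => σ.2.2.2) true true = 1) := by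
  rintro ⟨N, ⟨h1,h2,h3,h4⟩, ⟨h5,h6,h7,h8⟩, ⟨h9,h10,h11,h12⟩, ⟨h13,h14,h15,h16⟩⟩
  simp [nmarg, Fintype.sum_prod_type, Finset.sum_filter, Fintype.sum_bool] at *
  omega
end

section
/- The Bell family admits a signed global section: there exists a function N : Bool^4 → ℤ (allowing negative values) whose pairwise marginals over the contexts (A,B), (A',B), (A,B'), (A',B') equal respectively [[4,0],[0,4]], [[3,1],[1,3]], [[3,1],[1,3]], [[1,3],[3,1]]. -/
/-- The (X,Y)-marginal of a `ℤ`-valued relation `N : Bool^4 → ℤ`. -/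
def zmarg (N : Bool × Bool × Bool × Bool → ℤ)
    (f g : Bool × Bool × Bool × Bool → Bool) (x y : Bool) : ℤ :=
  ∑ σ ∈ Finset.univ.filter
      (fun σ : Bool × Bool × Bool × Bool => f σ = x ∧ g σ = y), N σ

def Nsol : Bool × Bool × Bool × Bool → ℤ
  | (false,false,false,false) => 3
  | (false,false,true,true) => 1
  | (false,true,false,false) => -3
  | (false,true,true,false) => 3
  | (true,false,false,false) => -3
  | (true,false,false,true) => 3
  | (true,true,false,false) => 4
  | _ => 0

theorem bell_family_has_signed_global_section :
    ∃ N : Bool × Bool × Bool × Bool → ℤ,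
      (zmarg N (fun σ => σ.1) (fun σ => σ.2.1) false false = 4 ∧
       zmarg N (fun σ => σ.1) (fun σ => σ.2.1) false true = 0 ∧
       zmarg N (fun σ => σ.1) (fun σ => σ.2.1) true false = 0 ∧
       zmarg N (fun σ => σ.1) (fun σ => σ.2.1) true true = 4) ∧
      (zmarg N (fun σ => σ.2.2.1) (fun σ => σ.2.1) false false = 3 ∧
       zmarg N (fun σ => σ.2.2.1) (fun σ => σ.2.1) false true = 1 ∧
       zmarg N (fun σ => σ.2.2.1) (fun σ => σ.2.1) true false = 1 ∧
       zmarg N (fun σ => σ.2.2.1) (fun σ => σ.2.1) true true = 3) ∧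
      (zmarg N (fun σ => σ.1) (fun σ => σ.2.2.2) false false = 3 ∧
       zmarg N (fun σ => σ.1) (fun σ => σ.2.2.2) false true = 1 ∧
       zmarg N (fun σ => σ.1) (fun σ => σ.2.2.2) true false = 1 ∧
       zmarg N (fun σ => σ.1) (fun σ => σ.2.2.2) true true = 3) ∧
      (zmarg N (fun σ => σ.2.2.1) (fun σ => σ.2.2.2) false false = 1 ∧
       zmarg N (fun σ => σ.2.2.1) (fun σ => σ.2.2.2) false true = 3 ∧
       zmarg N (fun σ => σ.2.2.1) (fun σ => σ.2.2.2) true false = 3 ∧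
       zmarg N (fun σ => σ.2.2.1) (fun σ => σ.2.2.2) true true = 1) := by
  exact ⟨Nsol, by decide⟩
end

section
/- There exists a versioned table (the paper's Table 3, with 8 indices, 5 versions arranged in the tree order 1 < 2 < 5, 1 < 3, 1 < 4 and 2,3,4 pairwise incomparable) and a version assignment ω with ω(C_AB)=5, ω(C_{A'B})=2, ω(C_{AB'})=3, ω(C_{A'B'})=4, such that each of the four snapshots T_{≤ω(C)} restricted to its context is a complete 8-row table with no missing data, yet the resulting family of pairwise count relations is the Bell family [[4,0],[0,4]], [[3,1],[1,3]], [[3,1],[1,3]], [[1,3],[3,1]], which has no global ℕ-valued section. -/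
/-- The version partial order of the paper's Table 3 on five versions
(0-indexed: version `k` of the paper is `k-1` here): the tree
`1 < 2 < 5`, `1 < 3`, `1 < 4` with `2, 3, 4` pairwise incomparable. -/
def vle (u v : Fin 5) : Prop := u = v ∨ u = 0 ∨ (u = 1 ∧ v = 4)

instance : DecidableRel vle := fun u v => by unfold vle; infer_instance

/-- A row of a versioned table: (version, index, state in Bool^4 with
columns A, B, A', B'). -/
abbrev VRow := Fin 5 × Fin 8 × (Bool × Bool × Bool × Bool)

/-- The snapshot of a versioned table at version `v`: for each index, the
row with the maximal version `u ≤ v` present in the table. -/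
def snapshot (T : Finset VRow) (v : Fin 5) : Finset VRow :=
  T.filter (fun r => vle r.1 v ∧
    ∀ r' ∈ T, r'.2.1 = r.2.1 → vle r'.1 v → vle r'.1 r.1)

/-- Count relation of a snapshot for a two-column context. -/
def scount (T : Finset VRow) (v : Fin 5)
    (f g : Bool × Bool × Bool × Bool → Bool) (x y : Bool) : ℕ :=
  ((snapshot T v).filter (fun r => f r.2.2 = x ∧ g r.2.2 = y)).card

def cA : Bool × Bool × Bool × Bool → Bool := fun σ => σ.1
def cB : Bool × Bool × Bool × Bool → Bool := fun σ => σ.2.1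
def cA' : Bool × Bool × Bool × Bool → Bool := fun σ => σ.2.2.1
def cB' : Bool × Bool × Bool × Bool → Bool := fun σ => σ.2.2.2


def Tbl : Finset VRow := {
  (4,0,(true,true,false,false)), (4,1,(true,true,false,false)),
  (4,2,(true,true,false,false)), (4,3,(true,true,false,false)),
  (4,4,(false,false,false,false)), (4,5,(false,false,false,false)),
  (4,6,(false,false,false,false)), (4,7,(false,false,false,false)),
  (1,0,(false,true,true,false)), (1,1,(false,true,true,false)),
  (1,2,(false,true,true,false)), (1,3,(false,false,false,false)),
  (1,4,(false,false,false,false)), (1,5,(false,false,false,false)),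
  (1,6,(false,false,true,false)), (1,7,(false,true,false,false)),
  (2,0,(true,false,false,true)), (2,1,(true,false,false,true)),
  (2,2,(true,false,false,true)), (2,3,(false,false,false,false)),
  (2,4,(false,false,false,false)), (2,5,(false,false,false,false)),
  (2,6,(true,false,false,false)), (2,7,(false,false,false,true)),
  (3,0,(false,false,true,true)), (3,1,(false,false,false,false)),
  (3,2,(false,false,true,false)), (3,3,(false,false,true,false)),
  (3,4,(false,false,true,false)), (3,5,(false,false,false,true)),
  (3,6,(false,false,false,true)), (3,7,(false,false,false,true)) }

/-- Contexts and the versions at which they are observed: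
ω(C_AB) = 5, ω(C_{A'B}) = 2, ω(C_{AB'}) = 3, ω(C_{A'B'}) = 4
(0-indexed: 4, 1, 2, 3). -/
theorem versioned_table_snapshots_give_bell_family :
    ∃ T : Finset VRow,
      -- (version, index) prefixes are unique
      (∀ r ∈ T, ∀ r' ∈ T, r.1 = r'.1 → r.2.1 = r'.2.1 → r = r') ∧
      -- each context's snapshot is a complete 8-row table: exactly one row
      -- per index, with no missing data (states are total in Bool^4)
      (∀ v ∈ ({4, 1, 2, 3} : Finset (Fin 5)), ∀ i : Fin 8,
        ∃! r, r ∈ snapshot T v ∧ r.2.1 = i) ∧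
      -- the four snapshot count relations are the Bell family
      (∀ x y : Bool, scount T 4 cA cB x y = if x = y then 4 else 0) ∧
      (∀ x y : Bool, scount T 1 cA' cB x y = if x = y then 3 else 1) ∧
      (∀ x y : Bool, scount T 2 cA cB' x y = if x = y then 3 else 1) ∧
      (∀ x y : Bool, scount T 3 cA' cB' x y = if x = y then 1 else 3) ∧
      -- which has no global ℕ-valued section
      ¬ ∃ N : Bool × Bool × Bool × Bool → ℕ,
        (∀ x y : Bool, nmarg N cA cB x y = scount T 4 cA cB x y) ∧
        (∀ x y : Bool, nmarg N cA' cB x y = scount T 1 cA' cB x y) ∧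
        (∀ x y : Bool, nmarg N cA cB' x y = scount T 2 cA cB' x y) ∧
        (∀ x y : Bool, nmarg N cA' cB' x y = scount T 3 cA' cB' x y) := by

  have hs1 : ∀ x y : Bool, scount Tbl 4 cA cB x y = if x = y then 4 else 0 := by decide
  have hs2 : ∀ x y : Bool, scount Tbl 1 cA' cB x y = if x = y then 3 else 1 := by decide
  have hs3 : ∀ x y : Bool, scount Tbl 2 cA cB' x y = if x = y then 3 else 1 := by decide
  have hs4 : ∀ x y : Bool, scount Tbl 3 cA' cB' x y = if x = y then 1 else 3 := by decide
  have hcard : ∀ v ∈ ({4, 1, 2, 3} : Finset (Fin 5)), ∀ i : Fin 8,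
      ((snapshot Tbl v).filter (fun r => r.2.1 = i)).card = 1 := by decide
  refine ⟨Tbl, @of_decide_eq_true _ (@Finset.decidableDforallFinset _ _ _ fun _ _ =>
      @Finset.decidableDforallFinset _ _ _ fun _ _ => inferInstance) (by rfl), ?_, hs1, hs2, hs3, hs4, ?_⟩
  · intro v hv i
    obtain ⟨a, ha⟩ := Finset.card_eq_one.mp (hcard v hv i)
    have hmem := ha ▸ Finset.mem_singleton_self a
    refine ⟨a, ⟨(Finset.mem_filter.mp hmem).1, (Finset.mem_filter.mp hmem).2⟩, ?_⟩
    intro y hy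
    have hy' : y ∈ (snapshot Tbl v).filter (fun r => r.2.1 = i) :=
      Finset.mem_filter.mpr ⟨hy.1, hy.2⟩
    rw [ha] at hy'
    exact Finset.mem_singleton.mp hy'
  · rintro ⟨N, h1, h2, h3, h4⟩
    have h1tt := (h1 true true).trans (hs1 true true)
    have h1tf := (h1 true false).trans (hs1 true false)
    have h1ft := (h1 false true).trans (hs1 false true)
    have h1ff := (h1 false false).trans (hs1 false false)
    have h2tt := (h2 true true).trans (hs2 true true)
    have h2tf := (h2 true false).trans (hs2 true false)
    have h2ft := (h2 false true).trans (hs2 false true)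
    have h2ff := (h2 false false).trans (hs2 false false)
    have h3tt := (h3 true true).trans (hs3 true true)
    have h3tf := (h3 true false).trans (hs3 true false)
    have h3ft := (h3 false true).trans (hs3 false true)
    have h3ff := (h3 false false).trans (hs3 false false)
    have h4tt := (h4 true true).trans (hs4 true true)
    have h4tf := (h4 true false).trans (hs4 true false)
    have h4ft := (h4 false true).trans (hs4 false true)
    have h4ff := (h4 false false).trans (hs4 false false)
    simp only [nmarg, Finset.sum_filter, Fintype.sum_prod_type, Fintype.sum_bool] at h1tt h1tf h1ft h1ff h2tt h2tf h2ft h2ff h3tt h3tf h3ft h3ff h4tt h4tf h4ft h4ff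
    simp only [nmarg, cA, cB, cA', cB', Finset.sum_filter, Fintype.sum_prod_type,
        Fintype.sum_bool] at h1tt h1tf h1ft h1ff h2tt h2tf h2ft h2ff h3tt h3tf h3ft h3ff h4tt h4tf h4ft h4ff
    norm_num at h1tt h1tf h1ft h1ff h2tt h2tf h2ft h2ff h3tt h3tf h3ft h3ff h4tt h4tf h4ft h4ff
    omega
end
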